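/- Let A ∈ ℝ^{n×n}, B ∈ ℝ^{n×m}, C ∈ ℝ^{p×n}, K ∈ ℝ^{m×n}, R ≻ 0. Suppose (A, C) is observable. Then the block matrix Ω₀ = [[ −A + BK, −B ], [ 0, 0 ], [ C, 0 ], [ −√R K, √R ]] ∈ ℝ^{(2n+p+m)×(n+m)} evaluated at λ = 0 (replacing the zero block appropriately: rows are [−A+BK, −B], [0, 0·I], [C, 0], [−√R K, √R]) has full column rank n + m; equivalently, if Ω₀ r = 0 with r = (r₁, r₂) then r₁ = 0 and r₂ = 0. -/

import Mathlib

open Matrix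

/-- Observability matrix of the pair `(A, C)`. -/
noncomputable def obsMat {n : ℕ} {o : Type*} (A : Matrix (Fin n) (Fin n) ℝ)
    (C : Matrix o (Fin n) ℝ) : Matrix (Fin n × o) (Fin n) ℝ :=
  fun ik j => (C * A ^ (ik.1 : ℕ)) ik.2 j

/-- The square root of a positive semidefinite matrix, as `Matrix.PosSemidef.sqrt` was defined
in the older Mathlib (removed since). -/
noncomputable def Matrix.PosSemidef.sqrt {n : Type*} [Fintype n] [DecidableEq n]
    {A : Matrix n n ℝ} (hA : A.PosSemidef) : Matrix n n ℝ :=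
  (hA.1.eigenvectorUnitary : Matrix n n ℝ) * diagonal ((↑) ∘ Real.sqrt ∘ hA.1.eigenvalues) *
    (star (hA.1.eigenvectorUnitary : Matrix n n ℝ))

theorem Matrix.PosSemidef.sqrt_mul_self {n : Type*} [Fintype n] [DecidableEq n]
    {A : Matrix n n ℝ} (hA : A.PosSemidef) : hA.sqrt * hA.sqrt = A := by
  have hU : star (hA.1.eigenvectorUnitary : Matrix n n ℝ) * (hA.1.eigenvectorUnitary : Matrix n n ℝ) = 1 :=
    Unitary.coe_star_mul_self _
  have hD : diagonal ((↑) ∘ Real.sqrt ∘ hA.1.eigenvalues) * diagonal ((↑) ∘ Real.sqrt ∘ hA.1.eigenvalues)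
      = diagonal (RCLike.ofReal ∘ hA.1.eigenvalues : n → ℝ) := by
    rw [diagonal_mul_diagonal]
    congr 1
    funext i
    simp [Real.mul_self_sqrt (hA.eigenvalues_nonneg i)]
  unfold Matrix.PosSemidef.sqrt
  conv_rhs => rw [hA.1.spectral_theorem]
  rw [Unitary.conjStarAlgAut_apply, ← hD]
  simp only [Matrix.mul_assoc]
  rw [← Matrix.mul_assoc _ (hA.1.eigenvectorUnitary : Matrix n n ℝ), hU, Matrix.one_mul]

theorem hautus_rank_at_zero
    {n m p : ℕ} (A : Matrix (Fin n) (Fin n) ℝ) (B : Matrix (Fin n) (Fin m) ℝ)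
    (C : Matrix (Fin p) (Fin n) ℝ) (K : Matrix (Fin m) (Fin n) ℝ)
    (R : Matrix (Fin m) (Fin m) ℝ) (hR : R.PosDef)
    (hobs : (obsMat A C).rank = n)
    (r₁ : Fin n → ℝ) (r₂ : Fin m → ℝ)
    (h1 : (-A + B * K) *ᵥ r₁ + (-B) *ᵥ r₂ = 0)
    (h2 : (0 : Matrix (Fin m) (Fin n) ℝ) *ᵥ r₁ + ((0 : ℝ) • (1 : Matrix (Fin m) (Fin m) ℝ)) *ᵥ r₂ = 0)
    (h3 : C *ᵥ r₁ = 0)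
    (h4 : (-(hR.posSemidef.sqrt * K)) *ᵥ r₁ + hR.posSemidef.sqrt *ᵥ r₂ = 0) :
    r₁ = 0 ∧ r₂ = 0 := by
  set S := hR.posSemidef.sqrt with hS
  have hSv : S *ᵥ (r₂ - K *ᵥ r₁) = 0 := by
    rw [neg_mulVec, ← mulVec_mulVec] at h4
    rw [mulVec_sub]
    linear_combination (norm := module) h4
  have hRv : R *ᵥ (r₂ - K *ᵥ r₁) = 0 := by
    have h : (S * S) *ᵥ (r₂ - K *ᵥ r₁) = 0 := by
      rw [← mulVec_mulVec, hSv, mulVec_zero]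
    rwa [hR.posSemidef.sqrt_mul_self] at h
  have hr2 : r₂ = K *ᵥ r₁ := by
    have hinj : Function.Injective R.mulVec := mulVec_injective_iff_isUnit.mpr hR.isUnit
    have h0 : r₂ - K *ᵥ r₁ = 0 := hinj (by rw [hRv, mulVec_zero])
    exact sub_eq_zero.mp h0
  have hA : A *ᵥ r₁ = 0 := by
    rw [add_mulVec, neg_mulVec, neg_mulVec, ← mulVec_mulVec, ← hr2] at h1
    have : -(A *ᵥ r₁) = 0 := by linear_combination (norm := module) h1
    simpa [neg_eq_zero] using this
  have hpow : ∀ i : ℕ, (C * A ^ i) *ᵥ r₁ = 0 := by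
    intro i
    cases i with
    | zero => simpa using h3
    | succ k =>
      have h : (C * A ^ (k+1)) *ᵥ r₁ = (C * A ^ k) *ᵥ (A *ᵥ r₁) := by
        rw [mulVec_mulVec, Matrix.mul_assoc, pow_succ]
      rw [h, hA, mulVec_zero]
  have hObs : (obsMat A C) *ᵥ r₁ = 0 := by
    funext ik
    have := congrFun (hpow (ik.1 : ℕ)) ik.2
    simpa [obsMat, mulVec, dotProduct] using this
  have hr1 : r₁ = 0 := by
    have hrange : Module.finrank ℝ ↥(LinearMap.range (obsMat A C).mulVecLin) = n := hobs
    have hfr := LinearMap.finrank_range_add_finrank_ker (obsMat A C).mulVecLin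
    rw [show Module.finrank ℝ (Fin n → ℝ) = n by simp] at hfr
    have hk0 : Module.finrank ℝ ↥(LinearMap.ker (obsMat A C).mulVecLin) = 0 := by omega
    have hrn : LinearMap.ker (obsMat A C).mulVecLin = ⊥ :=
      Submodule.finrank_eq_zero.mp hk0
    have hinj : Function.Injective (obsMat A C).mulVecLin := LinearMap.ker_eq_bot.mp hrn
    have : (obsMat A C).mulVecLin r₁ = (obsMat A C).mulVecLin 0 := by
      simp [mulVecLin_apply, hObs]
    exact hinj this
  exact ⟨hr1, by rw [hr2, hr1, mulVec_zero]⟩
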